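/- Let x_1, ..., x_k be distinct points in R^d with k >= 2, let S = conv{x_1, ..., x_k} denote their convex hull, and let alpha > 1 be a real number. Then for every vector v in R^d there exists an index i in {1, ..., k} such that dist(alpha * x_i + v, S) >= ((alpha - 1)/2) * diam(S), where dist(z, S) = inf_{s in S} ||z - s|| and diam(S) = sup_{p, q in S} ||p - q||. -/

import Mathlib

/-- **Lemma B.3 (convex-hull separation).**
Let `x 1, ..., x k` be distinct points in `ℝ^d` with `k ≥ 2`, let
`S = conv {x 1, ..., x k}`, and let `α > 1`. Then for every `v ∈ ℝ^d` there is an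
index `i` with `dist (α • x i + v, S) ≥ ((α - 1)/2) * diam S`. -/
theorem stmt_0 (d k : ℕ) (hk : 2 ≤ k)
    (x : Fin k → EuclideanSpace ℝ (Fin d)) (hx : Function.Injective x)
    (S : Set (EuclideanSpace ℝ (Fin d))) (hS : S = convexHull ℝ (Set.range x))
    (α : ℝ) (hα : 1 < α) :
    ∀ v : EuclideanSpace ℝ (Fin d), ∃ i : Fin k,
      ((α - 1) / 2) * Metric.diam S ≤ Metric.infDist (α • x i + v) S := by
  intro v
  have hkpos : 0 < k := by omega
  haveI : Nonempty (Fin k) := Fin.pos_iff_nonempty.mp hkpos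
  have hne : (Set.range x).Nonempty := Set.range_nonempty _
  have hSne : S.Nonempty := hS ▸ hne.mono (subset_convexHull ℝ _)
  have hScomp : IsCompact S := by
    rw [hS]
    exact (Set.finite_range x).isCompact_convexHull ℝ
  -- diam S = diam (range x)
  have hdiam : Metric.diam S = Metric.diam (Set.range x) := by
    rw [hS, convexHull_diam]
  -- find pair achieving the diameter
  obtain ⟨⟨i, j⟩, hmax⟩ := Finite.exists_max (fun p : Fin k × Fin k => dist (x p.1) (x p.2))
  have hbd : Metric.diam (Set.range x) ≤ dist (x i) (x j) := by
    apply Metric.diam_le_of_forall_dist_le (dist_nonneg)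
    rintro _ ⟨a, rfl⟩ _ ⟨b, rfl⟩
    exact hmax (a, b)
  have hdd : Metric.diam S ≤ dist (x i) (x j) := hdiam ▸ hbd
  have hdiam_nonneg : 0 ≤ Metric.diam S := Metric.diam_nonneg
  -- key: infDist y_i + diam S + infDist y_j ≥ dist y_i y_j
  set yi := α • x i + v
  set yj := α • x j + v
  obtain ⟨s, hsS, hsd⟩ := hScomp.exists_infDist_eq_dist hSne yi
  obtain ⟨t, htS, htd⟩ := hScomp.exists_infDist_eq_dist hSne yj
  have hst : dist s t ≤ Metric.diam S :=
    Metric.dist_le_diam_of_mem hScomp.isBounded hsS htS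
  have htri : dist yi yj ≤ Metric.infDist yi S + Metric.diam S + Metric.infDist yj S := by
    calc dist yi yj ≤ dist yi s + dist s t + dist t yj := dist_triangle4 yi s t yj
    _ ≤ Metric.infDist yi S + Metric.diam S + Metric.infDist yj S := by
        rw [hsd, htd, dist_comm t yj]; linarith
  have hyij : dist yi yj = α * dist (x i) (x j) := by
    have : dist yi yj = dist (α • x i) (α • x j) := by
      simp [yi, yj, dist_add_right]
    rw [this, dist_smul₀, Real.norm_eq_abs, abs_of_pos (by linarith)]
  have hsum : (α - 1) * Metric.diam S ≤ Metric.infDist yi S + Metric.infDist yj S := by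
    have h1 : α * Metric.diam S ≤ dist yi yj := by
      rw [hyij]
      exact mul_le_mul_of_nonneg_left hdd (by linarith)
    linarith
  rcases le_total (Metric.infDist yi S) (Metric.infDist yj S) with h | h
  · exact ⟨j, by linarith⟩
  · exact ⟨i, by linarith⟩
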